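/- arXiv:2502.04160 — 7 statements merged into one kernel-verified Lean document; each statement's English description precedes it below -/
import Mathlib

section
/- Let α, β, γ, δ > 0 and let m1, m2 : [0,∞) → ℝ be differentiable functions with m1(t) > 0 and m2(t) > 0 for all t ≥ 0, solving the Lotka–Volterra system m1'(t) = α m1(t) − β m1(t) m2(t), m2'(t) = −δ m2(t) + γ m1(t) m2(t). Then there exist constants 0 < c̲1 ≤ c̄1 and 0 < c̲2 ≤ c̄2 such that c̲1 ≤ m1(t) ≤ c̄1 and c̲2 ≤ m2(t) ≤ c̄2 for all t ≥ 0. -/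
lemma lv_log_le {x c : ℝ} (hx : 0 < x) (hc : 0 < c) :
    Real.log x ≤ c * x - 1 - Real.log c := by
  have h := Real.log_le_sub_one_of_pos (mul_pos hc hx)
  rw [Real.log_mul hc.ne' hx.ne'] at h
  linarith

lemma lv_aux_min {a b : ℝ} (ha : 0 < a) (hb : 0 < b) {X : ℝ} (hX : 0 < X) :
    b + b * Real.log (a / b) ≤ a * X - b * Real.log X := by
  have hl := lv_log_le hX (div_pos ha hb)
  have h2 := mul_le_mul_of_nonneg_left hl hb.le
  have h3 : b * (a / b * X) = a * X := by field_simp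
  nlinarith

lemma lv_aux_upper {a b X K : ℝ} (ha : 0 < a) (hb : 0 < b) (hX : 0 < X)
    (h : a * X - b * Real.log X ≤ K) :
    X ≤ 2 * (K - b - b * Real.log (a / (2 * b))) / a := by
  have hc : 0 < a / (2 * b) := div_pos ha (by linarith)
  have hl := lv_log_le hX hc
  have h2 : b * Real.log X ≤ b * (a / (2 * b) * X - 1 - Real.log (a / (2 * b))) :=
    mul_le_mul_of_nonneg_left hl hb.le
  have h3 : b * (a / (2 * b) * X) = a / 2 * X := by field_simp
  rw [le_div_iff₀ ha]
  nlinarith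

lemma lv_aux_lower {a b X K : ℝ} (ha : 0 < a) (hb : 0 < b) (hX : 0 < X)
    (h : a * X - b * Real.log X ≤ K) :
    Real.exp (-K / b) ≤ X := by
  have h1 : -K / b ≤ Real.log X := by
    rw [div_le_iff₀ hb]
    nlinarith [mul_pos ha hX]
  calc Real.exp (-K / b) ≤ Real.exp (Real.log X) := Real.exp_le_exp.2 h1
    _ = X := Real.exp_log hX

/-- Positive solutions of the Lotka–Volterra system are bounded
from above and away from zero, uniformly in time. -/
theorem lotka_volterra_solutions_bounded
    (α β γ δ : ℝ) (hα : 0 < α) (hβ : 0 < β) (hγ : 0 < γ) (hδ : 0 < δ)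
    (m1 m2 : ℝ → ℝ)
    (hm1pos : ∀ t : ℝ, 0 ≤ t → 0 < m1 t) (hm2pos : ∀ t : ℝ, 0 ≤ t → 0 < m2 t)
    (hm1 : ∀ t : ℝ, 0 ≤ t → HasDerivAt m1 (α * m1 t - β * m1 t * m2 t) t)
    (hm2 : ∀ t : ℝ, 0 ≤ t → HasDerivAt m2 (-(δ * m2 t) + γ * m1 t * m2 t) t) :
    ∃ c1l c1u c2l c2u : ℝ, 0 < c1l ∧ c1l ≤ c1u ∧ 0 < c2l ∧ c2l ≤ c2u ∧
      ∀ t : ℝ, 0 ≤ t →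
        c1l ≤ m1 t ∧ m1 t ≤ c1u ∧ c2l ≤ m2 t ∧ m2 t ≤ c2u := by
  set H : ℝ → ℝ := fun t =>
    γ * m1 t - δ * Real.log (m1 t) + (β * m2 t - α * Real.log (m2 t)) with hHdef
  have hH : ∀ t : ℝ, 0 ≤ t → HasDerivAt H 0 t := by
    intro t ht
    have h1 := hm1 t ht
    have h2 := hm2 t ht
    have p1 := hm1pos t ht
    have p2 := hm2pos t ht
    have d1 : HasDerivAt (fun s => γ * m1 s - δ * Real.log (m1 s))
        (γ * (α * m1 t - β * m1 t * m2 t)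
          - δ * ((α * m1 t - β * m1 t * m2 t) / m1 t)) t :=
      (h1.const_mul γ).sub ((h1.log p1.ne').const_mul δ)
    have d2 : HasDerivAt (fun s => β * m2 s - α * Real.log (m2 s))
        (β * (-(δ * m2 t) + γ * m1 t * m2 t)
          - α * ((-(δ * m2 t) + γ * m1 t * m2 t) / m2 t)) t :=
      (h2.const_mul β).sub ((h2.log p2.ne').const_mul α)
    have : HasDerivAt H _ t := d1.add d2
    convert this using 1
    field_simp
    ring
  have hconst : ∀ t : ℝ, 0 ≤ t → H t = H 0 := by
    intro t ht
    have key : ∀ x ∈ Set.Icc (0:ℝ) t, H x = H 0 := by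
      apply constant_of_has_deriv_right_zero
      · intro x hx
        exact (hH x hx.1).continuousAt.continuousWithinAt
      · intro x hx
        exact (hH x hx.1).hasDerivWithinAt
    exact key t ⟨ht, le_refl t⟩
  set C1 : ℝ := H 0 - (α + α * Real.log (β / α)) with hC1
  set C2 : ℝ := H 0 - (δ + δ * Real.log (γ / δ)) with hC2
  have hf : ∀ t : ℝ, 0 ≤ t → γ * m1 t - δ * Real.log (m1 t) ≤ C1 := by
    intro t ht
    have h := hconst t ht
    have hg := lv_aux_min hβ hα (hm2pos t ht)
    simp only [hHdef] at h
    rw [hC1, hHdef]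
    simp only []
    linarith
  have hg : ∀ t : ℝ, 0 ≤ t → β * m2 t - α * Real.log (m2 t) ≤ C2 := by
    intro t ht
    have h := hconst t ht
    have hf' := lv_aux_min hγ hδ (hm1pos t ht)
    simp only [hHdef] at h
    rw [hC2, hHdef]
    simp only []
    linarith
  refine ⟨Real.exp (-C1 / δ), 2 * (C1 - δ - δ * Real.log (γ / (2 * δ))) / γ,
    Real.exp (-C2 / α), 2 * (C2 - α - α * Real.log (β / (2 * α))) / β,
    Real.exp_pos _, ?_, Real.exp_pos _, ?_, ?_⟩
  · exact le_trans (lv_aux_lower hγ hδ (hm1pos 0 le_rfl) (hf 0 le_rfl))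
      (lv_aux_upper hγ hδ (hm1pos 0 le_rfl) (hf 0 le_rfl))
  · exact le_trans (lv_aux_lower hβ hα (hm2pos 0 le_rfl) (hg 0 le_rfl))
      (lv_aux_upper hβ hα (hm2pos 0 le_rfl) (hg 0 le_rfl))
  · intro t ht
    exact ⟨lv_aux_lower hγ hδ (hm1pos t ht) (hf t ht),
      lv_aux_upper hγ hδ (hm1pos t ht) (hf t ht),
      lv_aux_lower hβ hα (hm2pos t ht) (hg t ht),
      lv_aux_upper hβ hα (hm2pos t ht) (hg t ht)⟩
end

section
/- Let σ1, σ2 > 0, and let m1, m2 : [0,∞) → ℝ be continuous with 0 ≤ m1(t) ≤ c̄1 and 0 ≤ m2(t) ≤ c̄2 for all t. Assume there exist ζ1, ζ2 > 0 such that β m2(t) + α χ ≥ ζ1 and γ(μ − m1(t)) + ν θ ≥ ζ2 for all t ≥ 0. Let v1, v2 ≥ 0 at time 0 be differentiable solutions of v1' = −2(β m2 + αχ) v1 + σ1 m1 m2 and v2' = −2(γ(μ − m1) + νθ) v2 + σ2 m1 m2. Then for all t ≥ 0: v1(t) ≤ v1(0) e^{−2ζ1 t} + (σ1/(2ζ1))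 c̄1 c̄2 (1 − e^{−2ζ1 t}) and v2(t) ≤ v2(0) e^{−2ζ2 t} + (σ2/(2ζ2)) c̄1 c̄2 (1 − e^{−2ζ2 t}). -/
lemma ode_nonneg (ζ : ℝ) (hζ : 0 < ζ) (v a b : ℝ → ℝ)
    (hv0 : 0 ≤ v 0)
    (ha : ∀ t : ℝ, 0 ≤ t → ζ ≤ a t) (hb : ∀ t : ℝ, 0 ≤ t → 0 ≤ b t)
    (hv : ∀ t : ℝ, 0 ≤ t → HasDerivAt v (-2 * a t * v t + b t) t) :
    ∀ t : ℝ, 0 ≤ t → 0 ≤ v t := by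
  intro t0 ht0
  by_contra hneg
  push_neg at hneg
  have hvc : ContinuousOn v (Set.Ici 0) :=
    fun x hx => (hv x hx).continuousAt.continuousWithinAt
  set S : Set ℝ := Set.Icc 0 t0 ∩ v ⁻¹' Set.Ici 0 with hS
  have hSne : S.Nonempty := ⟨0, ⟨le_refl 0, ht0⟩, hv0⟩
  have hSclosed : IsClosed S :=
    (hvc.mono (fun x hx => hx.1)).preimage_isClosed_of_isClosed isClosed_Icc isClosed_Ici
  have hScompact : IsCompact S :=
    isCompact_Icc.of_isClosed_subset hSclosed Set.inter_subset_left
  obtain hc := hScompact.sSup_mem hSne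
  set c := sSup S with hcdef
  have hc0 : 0 ≤ c := hc.1.1
  have hct0 : c ≤ t0 := hc.1.2
  have hvcnn : 0 ≤ v c := hc.2
  have hclt : c < t0 := by
    rcases lt_or_eq_of_le hct0 with h | h
    · exact h
    · exact absurd (h ▸ hvcnn) (not_le.mpr hneg)
  have hIoo : ∀ x ∈ Set.Ioo c t0, v x < 0 := by
    intro x hx
    by_contra hxnn
    push_neg at hxnn
    have hxS : x ∈ S := ⟨⟨hc0.trans hx.1.le, hx.2.le⟩, hxnn⟩
    exact absurd (le_csSup (hScompact.bddAbove) hxS) (not_le.mpr hx.1)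
  have hmono : StrictMonoOn v (Set.Icc c t0) := by
    apply StrictMonoOn.mono (s := Set.Icc c t0) ?_ (le_refl _)
    apply strictMonoOn_of_deriv_pos (convex_Icc c t0)
    · exact hvc.mono (fun x hx => Set.mem_Ici.mpr (hc0.trans hx.1))
    · intro x hx
      rw [interior_Icc] at hx
      have hx0 : (0:ℝ) ≤ x := hc0.trans hx.1.le
      rw [(hv x hx0).deriv]
      have h1 := ha x hx0
      have h2 := hb x hx0
      have h3 := hIoo x hx
      nlinarith
  have := hmono ⟨le_refl c, hct0⟩ ⟨hct0, le_refl t0⟩ hclt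
  linarith

lemma ode_bound (ζ K : ℝ) (hζ : 0 < ζ) (hK : 0 ≤ K) (v a b : ℝ → ℝ)
    (hv0 : 0 ≤ v 0)
    (ha : ∀ t : ℝ, 0 ≤ t → ζ ≤ a t)
    (hb : ∀ t : ℝ, 0 ≤ t → 0 ≤ b t ∧ b t ≤ K)
    (hv : ∀ t : ℝ, 0 ≤ t → HasDerivAt v (-2 * a t * v t + b t) t) :
    ∀ t : ℝ, 0 ≤ t →
      v t ≤ v 0 * Real.exp (-2 * ζ * t) + K / (2 * ζ) * (1 - Real.exp (-2 * ζ * t)) := by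
  have hnn : ∀ t : ℝ, 0 ≤ t → 0 ≤ v t :=
    ode_nonneg ζ hζ v a b hv0 ha (fun t ht => (hb t ht).1) hv
  set h : ℝ → ℝ := fun t => v 0 + K / (2 * ζ) * (Real.exp (2 * ζ * t) - 1)
      - v t * Real.exp (2 * ζ * t) with hdef
  have hder : ∀ x : ℝ, 0 ≤ x → HasDerivAt h
      (K / (2 * ζ) * (2 * ζ * Real.exp (2 * ζ * x))
        - ((-2 * a x * v x + b x) * Real.exp (2 * ζ * x)
           + v x * (2 * ζ * Real.exp (2 * ζ * x)))) x := by
    intro x hx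
    have hexp : HasDerivAt (fun t : ℝ => Real.exp (2 * ζ * t))
        (2 * ζ * Real.exp (2 * ζ * x)) x := by
      have := ((hasDerivAt_id x).const_mul (2 * ζ)).exp
      simpa [mul_comm] using this
    exact (((hexp.sub_const 1).const_mul (K / (2 * ζ))).const_add (v 0)).sub
      ((hv x hx).mul hexp)
  have hmono : MonotoneOn h (Set.Ici 0) := by
    apply monotoneOn_of_deriv_nonneg (convex_Ici 0)
    · exact fun x hx => (hder x hx).continuousAt.continuousWithinAt
    · intro x hx
      rw [interior_Ici] at hx
      exact ((hder x hx.le).differentiableAt).differentiableWithinAt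
    · intro x hx
      rw [interior_Ici] at hx
      rw [(hder x hx.le).deriv]
      have h1 := ha x hx.le
      have h2 := (hb x hx.le).1
      have h3 := (hb x hx.le).2
      have h4 := hnn x hx.le
      have h5 : (0:ℝ) < Real.exp (2 * ζ * x) := Real.exp_pos _
      have hK2 : K / (2 * ζ) * (2 * ζ) = K := by field_simp
      nlinarith [mul_nonneg (mul_nonneg (sub_nonneg.mpr h1) h4) h5.le,
        mul_le_mul_of_nonneg_right h3 h5.le]
  intro t ht
  have := hmono (Set.mem_Ici.mpr (le_refl 0)) (Set.mem_Ici.mpr ht) ht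
  have h0 : h 0 = 0 := by simp [hdef]
  rw [h0, hdef] at this
  simp only at this
  have hE : Real.exp (-2 * ζ * t) = (Real.exp (2 * ζ * t))⁻¹ := by
    rw [← Real.exp_neg]; ring_nf
  have hEpos : (0:ℝ) < Real.exp (2 * ζ * t) := Real.exp_pos _
  rw [hE]
  rw [div_eq_mul_inv] at *
  have key : v t * Real.exp (2 * ζ * t) ≤
      v 0 + K * (2 * ζ)⁻¹ * (Real.exp (2 * ζ * t) - 1) := by linarith
  calc v t = v t * Real.exp (2 * ζ * t) * (Real.exp (2 * ζ * t))⁻¹ := by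
        field_simp
    _ ≤ (v 0 + K * (2 * ζ)⁻¹ * (Real.exp (2 * ζ * t) - 1)) * (Real.exp (2 * ζ * t))⁻¹ :=
        mul_le_mul_of_nonneg_right key (inv_nonneg.mpr hEpos.le)
    _ = v 0 * (Real.exp (2 * ζ * t))⁻¹
        + K * (2 * ζ)⁻¹ * (1 - (Real.exp (2 * ζ * t))⁻¹) := by
        field_simp

/-- Global-in-time L∞ bounds for the variances of the Fokker–Planck
system (case p = 1/2), under uniform lower bounds on the damping coefficients. -/
theorem variance_system_global_bounds
    (α β γ ν σ1 σ2 μ χ θ c1u c2u ζ1 ζ2 : ℝ)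
    (hσ1 : 0 < σ1) (hσ2 : 0 < σ2)
    (m1 m2 v1 v2 : ℝ → ℝ)
    (hm1c : ContinuousOn m1 (Set.Ici 0)) (hm2c : ContinuousOn m2 (Set.Ici 0))
    (hm1b : ∀ t : ℝ, 0 ≤ t → 0 ≤ m1 t ∧ m1 t ≤ c1u)
    (hm2b : ∀ t : ℝ, 0 ≤ t → 0 ≤ m2 t ∧ m2 t ≤ c2u)
    (hζ1 : 0 < ζ1) (hζ2 : 0 < ζ2)
    (hlb1 : ∀ t : ℝ, 0 ≤ t → ζ1 ≤ β * m2 t + α * χ)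
    (hlb2 : ∀ t : ℝ, 0 ≤ t → ζ2 ≤ γ * (μ - m1 t) + ν * θ)
    (hv10 : 0 ≤ v1 0) (hv20 : 0 ≤ v2 0)
    (hv1 : ∀ t : ℝ, 0 ≤ t →
      HasDerivAt v1 (-2 * (β * m2 t + α * χ) * v1 t + σ1 * m1 t * m2 t) t)
    (hv2 : ∀ t : ℝ, 0 ≤ t →
      HasDerivAt v2 (-2 * (γ * (μ - m1 t) + ν * θ) * v2 t + σ2 * m1 t * m2 t) t) :
    ∀ t : ℝ, 0 ≤ t →
      v1 t ≤ v1 0 * Real.exp (-2 * ζ1 * t) +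
        σ1 / (2 * ζ1) * (c1u * c2u) * (1 - Real.exp (-2 * ζ1 * t)) ∧
      v2 t ≤ v2 0 * Real.exp (-2 * ζ2 * t) +
        σ2 / (2 * ζ2) * (c1u * c2u) * (1 - Real.exp (-2 * ζ2 * t)) := by
  have hc1 : 0 ≤ c1u := (hm1b 0 le_rfl).1.trans (hm1b 0 le_rfl).2
  have hc2 : 0 ≤ c2u := (hm2b 0 le_rfl).1.trans (hm2b 0 le_rfl).2
  have hbnd : ∀ (σ : ℝ), 0 < σ → ∀ t : ℝ, 0 ≤ t →
      0 ≤ σ * m1 t * m2 t ∧ σ * m1 t * m2 t ≤ σ * (c1u * c2u) := by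
    intro σ hσ t ht
    obtain ⟨h1, h2⟩ := hm1b t ht
    obtain ⟨h3, h4⟩ := hm2b t ht
    constructor
    · positivity
    · nlinarith [mul_le_mul h2 h4 h3 hc1, mul_le_mul_of_nonneg_left (mul_le_mul h2 h4 h3 hc1) hσ.le]
  have B1 := ode_bound ζ1 (σ1 * (c1u * c2u)) hζ1 (by positivity) v1
    (fun t => β * m2 t + α * χ) (fun t => σ1 * m1 t * m2 t) hv10 hlb1
    (hbnd σ1 hσ1) hv1
  have B2 := ode_bound ζ2 (σ2 * (c1u * c2u)) hζ2 (by positivity) v2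
    (fun t => γ * (μ - m1 t) + ν * θ) (fun t => σ2 * m1 t * m2 t) hv20 hlb2
    (hbnd σ2 hσ2) hv2
  intro t ht
  have e1 : σ1 * (c1u * c2u) / (2 * ζ1) = σ1 / (2 * ζ1) * (c1u * c2u) := by ring
  have e2 : σ2 * (c1u * c2u) / (2 * ζ2) = σ2 / (2 * ζ2) * (c1u * c2u) := by ring
  exact ⟨e1 ▸ B1 t ht, e2 ▸ B2 t ht⟩
end

section
/- Let α, β, γ, δ, σ1 > 0, χ ∈ ℝ, and let m1, m2 : [0,∞) → ℝ be differentiable solutions of the Lotka–Volterra system m1' = α m1 − β m1 m2, m2' = −δ m2 + γ m1 m2 with m1(t) > 0 and m2(t) > 0 for all t ≥ 0. Let v1 be a differentiable solution of v1'(t) = −2(β m2(t) + α χ) v1(t) + σ1 m1(t) m2(t). Then for all t ≥ 0: v1(t) = (v1(0)/m1(0)²) m1(t)² e^{−2α(χ+1)t} + σ1 m1(t)² e^{−2α(χ+1)t} ∫₀ᵗ (m2(s)/m1(s)) e^{2α(χ+1)s} ds. -/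
/-- Sharper explicit representation of the prey variance, obtained by
extracting the Lotka–Volterra mean `m1` from the Duhamel formula. -/
theorem prey_variance_sharp_representation
    (α β γ δ σ1 χ : ℝ)
    (hα : 0 < α) (hβ : 0 < β) (hγ : 0 < γ) (hδ : 0 < δ) (hσ1 : 0 < σ1)
    (m1 m2 v1 : ℝ → ℝ)
    (hm1pos : ∀ t : ℝ, 0 ≤ t → 0 < m1 t) (hm2pos : ∀ t : ℝ, 0 ≤ t → 0 < m2 t)
    (hm1 : ∀ t : ℝ, 0 ≤ t → HasDerivAt m1 (α * m1 t - β * m1 t * m2 t) t)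
    (hm2 : ∀ t : ℝ, 0 ≤ t → HasDerivAt m2 (-(δ * m2 t) + γ * m1 t * m2 t) t)
    (hv1 : ∀ t : ℝ, 0 ≤ t →
      HasDerivAt v1 (-2 * (β * m2 t + α * χ) * v1 t + σ1 * m1 t * m2 t) t) :
    ∀ t : ℝ, 0 ≤ t →
      v1 t = v1 0 / (m1 0) ^ 2 * (m1 t) ^ 2 * Real.exp (-2 * α * (χ + 1) * t) +
        σ1 * (m1 t) ^ 2 * Real.exp (-2 * α * (χ + 1) * t) *
          ∫ s in (0:ℝ)..t, m2 s / m1 s * Real.exp (2 * α * (χ + 1) * s) := by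
  intro T hT
  set c : ℝ := 2 * α * (χ + 1) with hc
  set F : ℝ → ℝ := fun t => v1 t * Real.exp (c * t) / (m1 t) ^ 2 with hF
  -- derivative of F
  have hmem : ∀ x ∈ Set.uIcc (0:ℝ) T, (0:ℝ) ≤ x := by
    intro x hx
    rw [Set.uIcc_of_le hT] at hx
    exact hx.1
  have hFderiv : ∀ x ∈ Set.uIcc (0:ℝ) T,
      HasDerivAt F (σ1 * (m2 x / m1 x * Real.exp (c * x))) x := by
    intro x hx
    have hx0 := hmem x hx
    have hm1x := hm1pos x hx0
    have hm1xne : m1 x ≠ 0 := ne_of_gt hm1x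
    have hm1sqne : (m1 x) ^ 2 ≠ 0 := pow_ne_zero 2 hm1xne
    have he : HasDerivAt (fun t => Real.exp (c * t)) (Real.exp (c * x) * c) x := by
      simpa [Function.comp_def] using (Real.hasDerivAt_exp (c * x)).comp x ((hasDerivAt_id x).const_mul c)
    have hnum : HasDerivAt (fun t => v1 t * Real.exp (c * t))
        ((-2 * (β * m2 x + α * χ) * v1 x + σ1 * m1 x * m2 x) * Real.exp (c * x)
          + v1 x * (Real.exp (c * x) * c)) x := (hv1 x hx0).mul he
    have hden : HasDerivAt (fun t => (m1 t) ^ 2)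
        (2 * (m1 x) ^ 1 * (α * m1 x - β * m1 x * m2 x)) x := by
      simpa using (hm1 x hx0).fun_pow 2
    have this : HasDerivAt (fun t => v1 t * Real.exp (c * t) / (m1 t) ^ 2) _ x :=
      hnum.div hden hm1sqne
    convert this using 1
    field_simp
    ring
  have hcont : ContinuousOn (fun s => σ1 * (m2 s / m1 s * Real.exp (c * s)))
      (Set.uIcc (0:ℝ) T) := by
    have hcm1 : ContinuousOn m1 (Set.uIcc (0:ℝ) T) := fun x hx =>
      ((hm1 x (hmem x hx)).continuousAt).continuousWithinAt
    have hcm2 : ContinuousOn m2 (Set.uIcc (0:ℝ) T) := fun x hx =>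
      ((hm2 x (hmem x hx)).continuousAt).continuousWithinAt
    have hce : ContinuousOn (fun s : ℝ => Real.exp (c * s)) (Set.uIcc (0:ℝ) T) :=
      (Real.continuous_exp.comp (continuous_const.mul continuous_id)).continuousOn
    exact continuousOn_const.mul
      (((hcm2.div hcm1 (fun x hx => ne_of_gt (hm1pos x (hmem x hx)))).mul hce))
  have hint : IntervalIntegrable (fun s => σ1 * (m2 s / m1 s * Real.exp (c * s)))
      MeasureTheory.volume 0 T := hcont.intervalIntegrable
  have hFTC := intervalIntegral.integral_eq_sub_of_hasDerivAt hFderiv hint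
  have hpull : ∫ s in (0:ℝ)..T, σ1 * (m2 s / m1 s * Real.exp (c * s))
      = σ1 * ∫ s in (0:ℝ)..T, m2 s / m1 s * Real.exp (c * s) :=
    intervalIntegral.integral_const_mul _ _
  rw [hpull] at hFTC
  have hF0 : F 0 = v1 0 / (m1 0) ^ 2 := by
    simp [hF]
  have hFT : F T = v1 T * Real.exp (c * T) / (m1 T) ^ 2 := rfl
  have hm1T : (m1 T) ^ 2 ≠ 0 := pow_ne_zero 2 (ne_of_gt (hm1pos T hT))
  have hexpne : Real.exp (c * T) ≠ 0 := Real.exp_ne_zero _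
  have key : v1 T * Real.exp (c * T) / (m1 T) ^ 2
      = v1 0 / (m1 0) ^ 2 + σ1 * ∫ s in (0:ℝ)..T, m2 s / m1 s * Real.exp (c * s) := by
    rw [← hF0, ← hFT]
    linarith [hFTC]
  have hneg : Real.exp (-2 * α * (χ + 1) * T) = (Real.exp (c * T))⁻¹ := by
    rw [← Real.exp_neg]
    rw [hc]
    ring_nf
  have h2 : ∀ s : ℝ, 2 * α * (χ + 1) * s = c * s := fun s => rfl
  have hv : v1 T = (v1 0 / (m1 0) ^ 2
      + σ1 * ∫ s in (0:ℝ)..T, m2 s / m1 s * Real.exp (c * s)) * (m1 T) ^ 2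
      * (Real.exp (c * T))⁻¹ := by
    rw [← key]
    field_simp
    rw [mul_div_assoc, div_self (ne_of_gt (hm1pos T hT)), mul_one]
  simp only [h2, hneg]
  rw [hv]
  ring
end

section
/- Let 0 < p ≤ 1, s0 > 0, β ∈ (0,1), y ≥ 0, and let x ∈ ℝ satisfy x ≥ (1−p) s0. If η ∈ ℝ satisfies η ≥ −(1−β) ((1−p) s0)^{1−p}, then the post-interaction prey size x' = x − β (y/(1+y)) x + x^p η is nonnegative. -/
/-- Positivity of the post-interaction prey size in the binary
interaction rule, under the uniform lower bound on the random variable. -/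
theorem post_interaction_prey_size_nonneg
    (p s0 β y x η : ℝ)
    (hp : 0 < p) (hp1 : p ≤ 1) (hs0 : 0 < s0)
    (hβ : 0 < β) (hβ1 : β < 1) (hy : 0 ≤ y)
    (hx : (1 - p) * s0 ≤ x)
    (hη : -((1 - β) * ((1 - p) * s0) ^ (1 - p)) ≤ η) :
    0 ≤ x - β * (y / (1 + y)) * x + x ^ p * η := by
  set c : ℝ := (1 - p) * s0 with hc_def
  have hc : 0 ≤ c := mul_nonneg (by linarith) hs0.le
  have hx0 : 0 ≤ x := le_trans hc hx
  have hxp : 0 ≤ x ^ p := Real.rpow_nonneg hx0 p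
  have hkey : x ^ p * c ^ (1 - p) ≤ x := by
    rcases eq_or_lt_of_le hx0 with h | h
    · rw [← h, Real.zero_rpow hp.ne', zero_mul]
    · have h1 : c ^ (1 - p) ≤ x ^ (1 - p) :=
        Real.rpow_le_rpow hc hx (by linarith)
      calc x ^ p * c ^ (1 - p) ≤ x ^ p * x ^ (1 - p) :=
            mul_le_mul_of_nonneg_left h1 hxp
        _ = x ^ (p + (1 - p)) := (Real.rpow_add h p (1 - p)).symm
        _ = x := by norm_num
  have ht0 : 0 ≤ y / (1 + y) := div_nonneg hy (by linarith)
  have ht1 : y / (1 + y) ≤ 1 := by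
    rw [div_le_one (by linarith)]; linarith
  have hηx : -((1 - β) * x) ≤ x ^ p * η := by
    have h2 : x ^ p * (-((1 - β) * c ^ (1 - p))) ≤ x ^ p * η :=
      mul_le_mul_of_nonneg_left hη hxp
    have h3 : (1 - β) * (x ^ p * c ^ (1 - p)) ≤ (1 - β) * x :=
      mul_le_mul_of_nonneg_left hkey (by linarith)
    nlinarith
  nlinarith [mul_le_mul_of_nonneg_left ht1 (mul_nonneg hβ.le hx0)]
end

section
/- Let α, β, γ, δ, K, ν > 0, μ ≥ 1 with δ = γμ − ν and γK > δ, and let χ, θ ∈ ℝ. Let m1, m2 : [0,∞) → ℝ satisfy 0 < c̲1 ≤ m1(t) ≤ c̄1 and 0 < c̲2 ≤ m2(t) ≤ c̄2, and assume β c̲2 + (α/K) c̲1 + αχ > 0 and γ(μ − c̄1) + νθ > 0. Define m1^eq(t) = α(χ+1) m1(t)/(β m2(t) + (α/K) m1(t) + αχ), m2^eq(t) = ν(θ+1) m2(t)/(γ(μ − m1(t)) + νθ), and m^∞ = (δ/γ, α(γK − δ)/(βγK)). Then for all t ≥ 0: max{|m1(t) − m1^eq(t)|, |m2(t) − m2^eq(t)|}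 ≤ ((βK + α)/(βK)) · max{β c̄1/(β c̲2 + (α/K) c̲1 + αχ), γ c̄2/(γ(μ − c̄1) + νθ)} · max{|m1(t) − δ/γ|, |m2(t) − α(γK−δ)/(βγK)|}. In particular, if (m1(t), m2(t)) → m^∞ as t → ∞, then max{|m1(t) − m1^eq(t)|, |m2(t) − m2^eq(t)|} → 0. -/
/-- Relative convergence estimate between the means of the logistic
Lotka–Volterra system and the means of the local Gamma equilibria; in particular
convergence of the means to the coexistence equilibrium implies relaxation of
`(m1, m2)` toward `(m1^eq, m2^eq)`. -/
theorem logistic_means_relax_to_equilibrium_means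
    (α β γ δ K ν μ χ θ c1l c1u c2l c2u : ℝ)
    (hα : 0 < α) (hβ : 0 < β) (hγ : 0 < γ) (hδ : 0 < δ) (hK : 0 < K) (hν : 0 < ν)
    (hμ : 1 ≤ μ) (hδeq : δ = γ * μ - ν) (hKδ : δ < γ * K)
    (m1 m2 : ℝ → ℝ)
    (hc1l : 0 < c1l) (hc2l : 0 < c2l)
    (hm1b : ∀ t : ℝ, 0 ≤ t → c1l ≤ m1 t ∧ m1 t ≤ c1u)
    (hm2b : ∀ t : ℝ, 0 ≤ t → c2l ≤ m2 t ∧ m2 t ≤ c2u)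
    (hd1 : 0 < β * c2l + α / K * c1l + α * χ)
    (hd2 : 0 < γ * (μ - c1u) + ν * θ) :
    (∀ t : ℝ, 0 ≤ t →
      max |m1 t - α * (χ + 1) * m1 t / (β * m2 t + α / K * m1 t + α * χ)|
          |m2 t - ν * (θ + 1) * m2 t / (γ * (μ - m1 t) + ν * θ)| ≤
        (β * K + α) / (β * K) *
          max (β * c1u / (β * c2l + α / K * c1l + α * χ))
              (γ * c2u / (γ * (μ - c1u) + ν * θ)) *
          max |m1 t - δ / γ| |m2 t - α * (γ * K - δ) / (β * γ * K)|) ∧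
    (Filter.Tendsto m1 Filter.atTop (nhds (δ / γ)) →
     Filter.Tendsto m2 Filter.atTop (nhds (α * (γ * K - δ) / (β * γ * K))) →
     Filter.Tendsto
       (fun t : ℝ =>
         max |m1 t - α * (χ + 1) * m1 t / (β * m2 t + α / K * m1 t + α * χ)|
             |m2 t - ν * (θ + 1) * m2 t / (γ * (μ - m1 t) + ν * θ)|)
       Filter.atTop (nhds 0)) := by
  have hβK : (0:ℝ) < β * K := mul_pos hβ hK
  set e1 : ℝ := δ / γ with he1
  set e2 : ℝ := α * (γ * K - δ) / (β * γ * K) with he2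
  set d1 : ℝ := β * c2l + α / K * c1l + α * χ with hd1def
  set d2 : ℝ := γ * (μ - c1u) + ν * θ with hd2def
  set C : ℝ := (β * K + α) / (β * K) with hC
  set Q : ℝ := max (β * c1u / d1) (γ * c2u / d2) with hQ
  have hC1 : (1:ℝ) ≤ C := by
    rw [hC, le_div_iff₀ hβK]; linarith
  have hC0 : (0:ℝ) ≤ C := le_trans zero_le_one hC1
  have hc1u : 0 < c1u := lt_of_lt_of_le hc1l ((hm1b 0 le_rfl).1.trans (hm1b 0 le_rfl).2)
  have hc2u : 0 < c2u := lt_of_lt_of_le hc2l ((hm2b 0 le_rfl).1.trans (hm2b 0 le_rfl).2)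
  have hQ0 : (0:ℝ) ≤ Q := by
    refine le_trans ?_ (le_max_left _ _)
    exact div_nonneg (by positivity) hd1.le
  have key : ∀ t : ℝ, 0 ≤ t →
      max |m1 t - α * (χ + 1) * m1 t / (β * m2 t + α / K * m1 t + α * χ)|
          |m2 t - ν * (θ + 1) * m2 t / (γ * (μ - m1 t) + ν * θ)| ≤
        C * Q * max |m1 t - e1| |m2 t - e2| := by
    intro t ht
    obtain ⟨h1l, h1u⟩ := hm1b t ht
    obtain ⟨h2l, h2u⟩ := hm2b t ht
    set a := m1 t with ha
    set b := m2 t with hb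
    have ha0 : 0 < a := lt_of_lt_of_le hc1l h1l
    have hb0 : 0 < b := lt_of_lt_of_le hc2l h2l
    set M : ℝ := max |a - e1| |b - e2| with hM
    have hM0 : 0 ≤ M := le_trans (abs_nonneg _) (le_max_left _ _)
    have hM1 : |a - e1| ≤ M := le_max_left _ _
    have hM2 : |b - e2| ≤ M := le_max_right _ _
    have hD1ge : d1 ≤ β * b + α / K * a + α * χ := by
      have hαK : 0 ≤ α / K := le_of_lt (div_pos hα hK)
      rw [hd1def]
      have := mul_le_mul_of_nonneg_left h2l (le_of_lt hβ)
      have := mul_le_mul_of_nonneg_left h1l hαK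
      linarith
    have hD1 : 0 < β * b + α / K * a + α * χ := lt_of_lt_of_le hd1 hD1ge
    have hD2ge : d2 ≤ γ * (μ - a) + ν * θ := by
      rw [hd2def]
      have : μ - c1u ≤ μ - a := by linarith
      have := mul_le_mul_of_nonneg_left this (le_of_lt hγ)
      linarith
    have hD2 : 0 < γ * (μ - a) + ν * θ := lt_of_lt_of_le hd2 hD2ge
    -- key identities
    have keynum : a * (β * (b - e2) + α / K * (a - e1))
        = a * (β * b + α / K * a + α * χ) - α * (χ + 1) * a := by
      rw [he1, he2]
      field_simp
      ring
    have id1 : a - α * (χ + 1) * a / (β * b + α / K * a + α * χ)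
        = a * (β * (b - e2) + α / K * (a - e1)) / (β * b + α / K * a + α * χ) := by
      rw [keynum, sub_div, mul_div_cancel_right₀ _ hD1.ne']
    have id2 : b - ν * (θ + 1) * b / (γ * (μ - a) + ν * θ)
        = -(γ * b * (a - e1)) / (γ * (μ - a) + ν * θ) := by
      rw [he1]
      field_simp [hD2.ne', hγ.ne']
      rw [hδeq]
      ring
    have bound1 : |a - α * (χ + 1) * a / (β * b + α / K * a + α * χ)| ≤ C * Q * M := by
      rw [id1, abs_div, abs_mul, abs_of_pos ha0, abs_of_pos hD1]
      have hnum : a * |β * (b - e2) + α / K * (a - e1)| ≤ c1u * ((β + α / K) * M) := by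
        have hX : |β * (b - e2) + α / K * (a - e1)| ≤ (β + α / K) * M := by
          calc |β * (b - e2) + α / K * (a - e1)|
              ≤ |β * (b - e2)| + |α / K * (a - e1)| := abs_add_le _ _
            _ = β * |b - e2| + α / K * |a - e1| := by
                rw [abs_mul, abs_mul, abs_of_pos hβ, abs_of_pos (div_pos hα hK)]
            _ ≤ β * M + α / K * M := by
                have := mul_le_mul_of_nonneg_left hM2 (le_of_lt hβ)
                have := mul_le_mul_of_nonneg_left hM1 (le_of_lt (div_pos hα hK))
                linarith
            _ = (β + α / K) * M := by ring
        exact mul_le_mul h1u hX (abs_nonneg _) hc1u.le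
      calc a * |β * (b - e2) + α / K * (a - e1)| / (β * b + α / K * a + α * χ)
          ≤ c1u * ((β + α / K) * M) / d1 := by
            apply div_le_div₀ (mul_nonneg hc1u.le (mul_nonneg (by positivity) hM0)) hnum hd1 hD1ge
        _ = C * (β * c1u / d1) * M := by
            rw [hC]
            field_simp
        _ ≤ C * Q * M := by
            apply mul_le_mul_of_nonneg_right _ hM0
            exact mul_le_mul_of_nonneg_left (le_max_left _ _) hC0
    have bound2 : |b - ν * (θ + 1) * b / (γ * (μ - a) + ν * θ)| ≤ C * Q * M := by
      rw [id2, abs_div, abs_neg, abs_mul, abs_mul, abs_of_pos hγ, abs_of_pos hb0,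
        abs_of_pos hD2]
      calc γ * b * |a - e1| / (γ * (μ - a) + ν * θ)
          ≤ γ * c2u * M / d2 := by
            apply div_le_div₀ (mul_nonneg (mul_nonneg hγ.le hc2u.le) hM0) _ hd2 hD2ge
            calc γ * b * |a - e1| ≤ γ * c2u * |a - e1| := by
                  apply mul_le_mul_of_nonneg_right _ (abs_nonneg _)
                  exact mul_le_mul_of_nonneg_left h2u (le_of_lt hγ)
              _ ≤ γ * c2u * M := by
                  apply mul_le_mul_of_nonneg_left hM1 (by positivity)
        _ = (γ * c2u / d2) * M := by ring
        _ ≤ C * Q * M := by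
            apply mul_le_mul_of_nonneg_right _ hM0
            calc γ * c2u / d2 ≤ Q := le_max_right _ _
              _ = 1 * Q := (one_mul Q).symm
              _ ≤ C * Q := mul_le_mul_of_nonneg_right hC1 hQ0
    exact max_le bound1 bound2
  refine ⟨key, ?_⟩
  intro h1 h2
  have hub : Filter.Tendsto
      (fun t : ℝ => C * Q * max |m1 t - e1| |m2 t - e2|)
      Filter.atTop (nhds 0) := by
    have t1 : Filter.Tendsto (fun t => |m1 t - e1|) Filter.atTop (nhds 0) := by
      have := (h1.sub_const e1)
      rw [sub_self] at this
      simpa using this.abs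
    have t2 : Filter.Tendsto (fun t => |m2 t - e2|) Filter.atTop (nhds 0) := by
      have := (h2.sub_const e2)
      rw [sub_self] at this
      simpa using this.abs
    have tm : Filter.Tendsto (fun t => max |m1 t - e1| |m2 t - e2|)
        Filter.atTop (nhds 0) := by
      have := t1.max t2
      simpa using this
    have := tm.const_mul (C * Q)
    simpa using this
  apply tendsto_of_tendsto_of_tendsto_of_le_of_le' tendsto_const_nhds hub
  · filter_upwards with t
    exact le_trans (abs_nonneg _) (le_max_left _ _)
  · filter_upwards [Filter.eventually_ge_atTop (0:ℝ)] with t ht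
    exact key t ht
end

section
/- Let α, β, γ, ν, σ1, σ2, K > 0, μ ≥ 1, χ, θ ∈ ℝ, and let m1, m2 : [0,∞) → ℝ be continuous with 0 ≤ m1(t) ≤ c̄1 and 0 ≤ m2(t) ≤ c̄2. Assume there exist ζ1, ζ2 > 0 with β m2(t) + (α/K) m1(t) + αχ ≥ ζ1 and γ(μ − m1(t)) + νθ ≥ ζ2 for all t. Let v1, v2 be differentiable solutions of v1' = −2(β m2 + (α/K) m1 + αχ) v1 + σ1 m1 (m1 + m2) and v2' = −2(γ(μ − m1) + νθ) v2 + σ2 m1 m2, and let v1^∞, v2^∞ ∈ ℝ be arbitrary constants. Then for all t ≥ 0: |v1(t) − v1^∞| ≤ |v1(0) − v1^∞| e^{−2ζ1 t} + ((β c̄2 + (α/K) c̄1 + α|χ|)/ζ1) · sup_{0≤s≤t} |σ1 m1(s)(m1(s)+m2(s))/(2(β m2(s) + (α/K) m1(s) + αχ)) − v1^∞|, and |v2(t) − v2^∞| ≤ |v2(0) − v2^∞| e^{−2ζ2 t} + ((γ(μ + c̄1) + ν|θ|)/ζ2) · sup_{0≤s≤t} |σ2 m1(s) m2(s)/(2(γ(μ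 − m1(s)) + νθ)) − v2^∞|. -/
open Set intervalIntegral in
private lemma gron_mono (a r v : ℝ → ℝ) (vinf c T : ℝ)
    (hac : Continuous a)
    (hapos : ∀ t : ℝ, 0 ≤ t → 0 < a t)
    (hv : ∀ t : ℝ, 0 ≤ t → HasDerivAt v (-(a t) * v t + r t) t)
    (hcnd : ∀ s ∈ Set.Icc (0:ℝ) T, 0 ≤ r s / a s - vinf + c) :
    MonotoneOn (fun s => Real.exp (∫ u in (0:ℝ)..s, a u) * (v s - vinf + c))
      (Set.Icc 0 T) := by
  have hPd : ∀ t : ℝ, HasDerivAt (fun s => ∫ u in (0:ℝ)..s, a u) (a t) t := fun t =>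
    intervalIntegral.integral_hasDerivAt_right (hac.intervalIntegrable _ _)
      (hac.stronglyMeasurableAtFilter _ _) hac.continuousAt
  have hkey : ∀ s ∈ Set.Ioo (0:ℝ) T,
      HasDerivAt (fun s => Real.exp (∫ u in (0:ℝ)..s, a u) * (v s - vinf + c))
        (Real.exp (∫ u in (0:ℝ)..s, a u) * a s * (v s - vinf + c) +
          Real.exp (∫ u in (0:ℝ)..s, a u) * (-(a s) * v s + r s)) s := by
    intro s hs
    exact ((hPd s).exp).mul (((hv s hs.1.le).sub_const vinf).add_const c)
  apply monotoneOn_of_deriv_nonneg (convex_Icc 0 T)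
  · have hPc : Continuous fun s => Real.exp (∫ u in (0:ℝ)..s, a u) :=
      Real.continuous_exp.comp (Differentiable.continuous fun t => (hPd t).differentiableAt)
    refine hPc.continuousOn.mul ?_
    intro s hs
    exact (((hv s hs.1).continuousAt.continuousWithinAt.sub
      continuousWithinAt_const).add continuousWithinAt_const)
  · intro s hs
    rw [interior_Icc] at hs
    exact (hkey s hs).differentiableAt.differentiableWithinAt
  · intro s hs
    rw [interior_Icc] at hs
    rw [(hkey s hs).deriv]
    have ha := hapos s hs.1.le
    have hx := hcnd s ⟨hs.1.le, hs.2.le⟩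
    have e1 : a s * (r s / a s - vinf + c) = r s - a s * vinf + a s * c := by
      field_simp
    have e2 : 0 ≤ r s - a s * vinf + a s * c := e1 ▸ mul_nonneg ha.le hx
    have e3 := (Real.exp_pos (∫ u in (0:ℝ)..s, a u)).le
    have e4 : Real.exp (∫ u in (0:ℝ)..s, a u) * a s * (v s - vinf + c) +
        Real.exp (∫ u in (0:ℝ)..s, a u) * (-(a s) * v s + r s) =
        Real.exp (∫ u in (0:ℝ)..s, a u) * (r s - a s * vinf + a s * c) := by ring
    rw [e4]
    exact mul_nonneg e3 e2

private lemma gron_key (a r v : ℝ → ℝ) (ζ A vinf : ℝ) (hζ : 0 < ζ)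
    (hac : Continuous a) (hrc : Continuous r)
    (haζ : ∀ t : ℝ, 0 ≤ t → ζ ≤ a t) (haA : ∀ t : ℝ, 0 ≤ t → a t ≤ A)
    (hv : ∀ t : ℝ, 0 ≤ t → HasDerivAt v (-(a t) * v t + r t) t) :
    ∀ T : ℝ, 0 ≤ T → |v T - vinf| ≤ |v 0 - vinf| * Real.exp (-ζ * T) +
      A / ζ * ⨆ s ∈ Set.Icc (0:ℝ) T, |r s / a s - vinf| := by
  intro T hT
  have hapos : ∀ t : ℝ, 0 ≤ t → 0 < a t := fun t ht => lt_of_lt_of_le hζ (haζ t ht)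
  set g : ℝ → ℝ := fun s => |r s / a s - vinf| with hg
  set S := ⨆ s ∈ Set.Icc (0:ℝ) T, g s with hSdef
  have h0mem : (0:ℝ) ∈ Set.Icc (0:ℝ) T := ⟨le_refl 0, hT⟩
  have hgc : ContinuousOn g (Set.Icc 0 T) := by
    apply ContinuousOn.abs
    exact ((hrc.continuousOn.div hac.continuousOn
      (fun t ht => (hapos t ht.1).ne')).sub continuousOn_const)
  have hbdd : BddAbove (g '' Set.Icc 0 T) :=
    (isCompact_Icc.image_of_continuousOn hgc).bddAbove
  have hbdd' : BddAbove (Set.range fun i : Set.Icc (0:ℝ) T => g i) := by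
    obtain ⟨B, hB⟩ := hbdd
    exact ⟨B, fun x hx => by
      obtain ⟨i, hi⟩ := hx
      exact hi ▸ hB (Set.mem_image_of_mem g i.2)⟩
  have hsub : sSup (∅ : Set ℝ) ≤ ⨆ i : Set.Icc (0:ℝ) T, g i := by
    rw [Real.sSup_empty]
    exact le_trans (abs_nonneg _) (le_ciSup_set hbdd h0mem)
  have hSimg : S = sSup (g '' Set.Icc 0 T) := (csSup_image hbdd' hsub).symm
  have hSge : ∀ s ∈ Set.Icc (0:ℝ) T, g s ≤ S := by
    intro s hs
    rw [hSimg]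
    exact le_csSup hbdd (Set.mem_image_of_mem g hs)
  have hS0 : 0 ≤ S := le_trans (abs_nonneg _) (hSge 0 h0mem)
  -- both monotonicity statements
  have hm1 : MonotoneOn (fun s => Real.exp (∫ u in (0:ℝ)..s, a u) * (v s - vinf + S))
      (Set.Icc 0 T) :=
    gron_mono a r v vinf S T hac hapos hv
      (fun s hs => by have := hSge s hs; rw [hg] at this; simp only at this
                      have := neg_abs_le (r s / a s - vinf); linarith [hSge s hs,
                        neg_abs_le (r s / a s - vinf)])
  have hm2 : MonotoneOn (fun s => Real.exp (∫ u in (0:ℝ)..s, a u) * ((-v s) - (-vinf) + S))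
      (Set.Icc 0 T) := by
    apply gron_mono a (fun s => -(r s)) (fun s => -(v s)) (-vinf) S T hac hapos
    · intro t ht
      have h := (hv t ht).neg
      rwa [show -(-(a t) * v t + r t) = -(a t) * -v t + -r t by ring] at h
    · intro s hs
      have h1 := hSge s hs
      have h2 := le_abs_self (r s / a s - vinf)
      rw [neg_div]
      simp only [hg] at h1
      linarith
  have hTmem : T ∈ Set.Icc (0:ℝ) T := ⟨hT, le_refl T⟩
  have i1 := hm1 h0mem hTmem hT
  have i2 := hm2 h0mem hTmem hT
  simp only [intervalIntegral.integral_same, Real.exp_zero, one_mul] at i1 i2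
  -- lower bound on the integral
  have hPT : ζ * T ≤ ∫ u in (0:ℝ)..T, a u := by
    have := intervalIntegral.integral_mono_on hT ((intervalIntegrable_const : IntervalIntegrable (fun _ => ζ) MeasureTheory.volume 0 T))
      (hac.intervalIntegrable _ _) (fun s hs => haζ s hs.1)
    rwa [intervalIntegral.integral_const, smul_eq_mul, sub_zero, mul_comm] at this
  set E := Real.exp (∫ u in (0:ℝ)..T, a u) with hE
  have hEpos : 0 < E := Real.exp_pos _
  have hεE : 1 ≤ Real.exp (-ζ * T) * E := by
    have h1 : Real.exp (ζ * T) ≤ E := Real.exp_le_exp.mpr hPT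
    have h2 := Real.exp_pos (-ζ * T)
    have h3 : Real.exp (-ζ * T) * Real.exp (ζ * T) = 1 := by
      rw [← Real.exp_add]; ring_nf; exact Real.exp_zero
    nlinarith
  have hε : 0 < Real.exp (-ζ * T) := Real.exp_pos _
  have hAS : S ≤ A / ζ * S := by
    have hAζ : 1 ≤ A / ζ := (one_le_div hζ).mpr (le_trans (haζ 0 le_rfl) (haA 0 le_rfl))
    nlinarith
  have habs1 : v 0 - vinf ≤ |v 0 - vinf| := le_abs_self _
  have habs2 : -(v 0 - vinf) ≤ |v 0 - vinf| := neg_le_abs _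
  rw [abs_le]
  constructor
  · -- lower:  -(bound) ≤ v T - vinf, from i1
    -- i1 : v 0 - vinf + S ≤ E * (v T - vinf + S)
    rcases le_or_gt 0 (v T - vinf + S) with h | h
    · nlinarith
    · -- E*(vT-vinf+S) ≤ exp(-ζT)⁻¹ (vT - vinf + S) i.e. εE(x) ≤ x for x<0
      nlinarith [mul_le_mul_of_nonneg_left i1 hε.le]
  · -- upper, from i2 : -(v 0) + vinf + S ≤ E * (-(v T) + vinf + S)
    rcases le_or_gt 0 (-(v T) + vinf + S) with h | h
    · nlinarith
    · nlinarith [mul_le_mul_of_nonneg_left i2 hε.le]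

/-- Gronwall-type bounds for the distance of the variances of the
logistic Fokker–Planck model from arbitrary constants `v1^∞`, `v2^∞`. -/
theorem logistic_variance_gronwall_bounds
    (α β γ ν σ1 σ2 K μ χ θ c1u c2u ζ1 ζ2 v1inf v2inf : ℝ)
    (hα : 0 < α) (hβ : 0 < β) (hγ : 0 < γ) (hν : 0 < ν)
    (hσ1 : 0 < σ1) (hσ2 : 0 < σ2) (hK : 0 < K) (hμ : 1 ≤ μ)
    (m1 m2 v1 v2 : ℝ → ℝ)
    (hm1c : ContinuousOn m1 (Set.Ici 0)) (hm2c : ContinuousOn m2 (Set.Ici 0))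
    (hm1b : ∀ t : ℝ, 0 ≤ t → 0 ≤ m1 t ∧ m1 t ≤ c1u)
    (hm2b : ∀ t : ℝ, 0 ≤ t → 0 ≤ m2 t ∧ m2 t ≤ c2u)
    (hζ1 : 0 < ζ1) (hζ2 : 0 < ζ2)
    (hlb1 : ∀ t : ℝ, 0 ≤ t → ζ1 ≤ β * m2 t + α / K * m1 t + α * χ)
    (hlb2 : ∀ t : ℝ, 0 ≤ t → ζ2 ≤ γ * (μ - m1 t) + ν * θ)
    (hv1 : ∀ t : ℝ, 0 ≤ t →
      HasDerivAt v1 (-2 * (β * m2 t + α / K * m1 t + α * χ) * v1 t +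
        σ1 * m1 t * (m1 t + m2 t)) t)
    (hv2 : ∀ t : ℝ, 0 ≤ t →
      HasDerivAt v2 (-2 * (γ * (μ - m1 t) + ν * θ) * v2 t + σ2 * m1 t * m2 t) t) :
    ∀ t : ℝ, 0 ≤ t →
      |v1 t - v1inf| ≤ |v1 0 - v1inf| * Real.exp (-2 * ζ1 * t) +
        (β * c2u + α / K * c1u + α * |χ|) / ζ1 *
          ⨆ s ∈ Set.Icc (0:ℝ) t,
            |σ1 * m1 s * (m1 s + m2 s) /
                (2 * (β * m2 s + α / K * m1 s + α * χ)) - v1inf| ∧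
      |v2 t - v2inf| ≤ |v2 0 - v2inf| * Real.exp (-2 * ζ2 * t) +
        (γ * (μ + c1u) + ν * |θ|) / ζ2 *
          ⨆ s ∈ Set.Icc (0:ℝ) t,
            |σ2 * m1 s * m2 s / (2 * (γ * (μ - m1 s) + ν * θ)) - v2inf| := by
  intro t ht
  have hproj : Continuous fun s : ℝ => max s 0 := continuous_id.max continuous_const
  have hmem : ∀ s : ℝ, max s 0 ∈ Set.Ici (0:ℝ) := fun s => Set.mem_Ici.mpr (le_max_right s 0)
  have hn1 : Continuous fun s => m1 (max s 0) := hm1c.comp_continuous hproj hmem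
  have hn2 : Continuous fun s => m2 (max s 0) := hm2c.comp_continuous hproj hmem
  have heq1 : ∀ s : ℝ, 0 ≤ s → m1 (max s 0) = m1 s := fun s hs => by rw [max_eq_left hs]
  have heq2 : ∀ s : ℝ, 0 ≤ s → m2 (max s 0) = m2 s := fun s hs => by rw [max_eq_left hs]
  have hαK : 0 < α / K := div_pos hα hK
  have hc1u : 0 ≤ c1u := le_trans (hm1b 0 le_rfl).1 (hm1b 0 le_rfl).2
  constructor
  · -- prey variance
    have key1 := gron_key
      (fun s => 2 * (β * m2 (max s 0) + α / K * m1 (max s 0) + α * χ))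
      (fun s => σ1 * m1 (max s 0) * (m1 (max s 0) + m2 (max s 0)))
      v1 (2 * ζ1) (2 * (β * c2u + α / K * c1u + α * |χ|)) v1inf
      (by positivity)
      (continuous_const.mul (((continuous_const.mul hn2).add
        (continuous_const.mul hn1)).add continuous_const))
      ((continuous_const.mul hn1).mul (hn1.add hn2))
      (fun s hs => by
        simp only [heq1 s hs, heq2 s hs]
        have := hlb1 s hs; linarith)
      (fun s hs => by
        simp only [heq1 s hs, heq2 s hs]
        have h1 := hm1b s hs; have h2 := hm2b s hs
        have h3 := le_abs_self χ
        nlinarith [hαK, hα.le, hβ.le])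
      (fun s hs => by
        have h := hv1 s hs
        rwa [show -2 * (β * m2 s + α / K * m1 s + α * χ) * v1 s +
            σ1 * m1 s * (m1 s + m2 s) =
            -(2 * (β * m2 (max s 0) + α / K * m1 (max s 0) + α * χ)) * v1 s +
            σ1 * m1 (max s 0) * (m1 (max s 0) + m2 (max s 0)) by
          simp only [heq1 s hs, heq2 s hs]; ring] at h)
      t ht
    have hsup : (⨆ s ∈ Set.Icc (0:ℝ) t,
        |σ1 * m1 (max s 0) * (m1 (max s 0) + m2 (max s 0)) /
          (2 * (β * m2 (max s 0) + α / K * m1 (max s 0) + α * χ)) - v1inf|) =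
        ⨆ s ∈ Set.Icc (0:ℝ) t,
          |σ1 * m1 s * (m1 s + m2 s) /
            (2 * (β * m2 s + α / K * m1 s + α * χ)) - v1inf| := by
      refine iSup_congr fun s => iSup_congr fun hs => ?_
      rw [heq1 s hs.1, heq2 s hs.1]
    rw [hsup, show -(2 * ζ1) * t = -2 * ζ1 * t by ring,
      show 2 * (β * c2u + α / K * c1u + α * |χ|) / (2 * ζ1) =
        (β * c2u + α / K * c1u + α * |χ|) / ζ1 by
          rw [mul_div_mul_left _ _ (two_ne_zero)]] at key1
    exact key1
  · -- predator variance
    have key2 := gron_key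
      (fun s => 2 * (γ * (μ - m1 (max s 0)) + ν * θ))
      (fun s => σ2 * m1 (max s 0) * m2 (max s 0))
      v2 (2 * ζ2) (2 * (γ * (μ + c1u) + ν * |θ|)) v2inf
      (by positivity)
      (continuous_const.mul (((continuous_const.mul
        (continuous_const.sub hn1))).add continuous_const))
      ((continuous_const.mul hn1).mul hn2)
      (fun s hs => by
        simp only [heq1 s hs]
        have := hlb2 s hs; linarith)
      (fun s hs => by
        simp only [heq1 s hs, heq2 s hs]
        have h1 := hm1b s hs
        have h3 := le_abs_self θ
        nlinarith [hγ.le, hν.le])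
      (fun s hs => by
        have h := hv2 s hs
        rwa [show -2 * (γ * (μ - m1 s) + ν * θ) * v2 s + σ2 * m1 s * m2 s =
            -(2 * (γ * (μ - m1 (max s 0)) + ν * θ)) * v2 s +
            σ2 * m1 (max s 0) * m2 (max s 0) by
          simp only [heq1 s hs, heq2 s hs]; ring] at h)
      t ht
    have hsup : (⨆ s ∈ Set.Icc (0:ℝ) t,
        |σ2 * m1 (max s 0) * m2 (max s 0) /
          (2 * (γ * (μ - m1 (max s 0)) + ν * θ)) - v2inf|) =
        ⨆ s ∈ Set.Icc (0:ℝ) t,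
          |σ2 * m1 s * m2 s / (2 * (γ * (μ - m1 s) + ν * θ)) - v2inf| := by
      refine iSup_congr fun s => iSup_congr fun hs => ?_
      rw [heq1 s hs.1, heq2 s hs.1]
    rw [hsup, show -(2 * ζ2) * t = -2 * ζ2 * t by ring,
      show 2 * (γ * (μ + c1u) + ν * |θ|) / (2 * ζ2) =
        (γ * (μ + c1u) + ν * |θ|) / ζ2 by
          rw [mul_div_mul_left _ _ (two_ne_zero)]] at key2
    exact key2
end

section
/- Let α, β, γ, δ, ν, σ1, σ2, K > 0, μ ≥ 1 with δ = γμ − ν and γK > δ, and let χ, θ ∈ ℝ. Let m1, m2 : [0,∞) → ℝ be continuous and bounded with m1(t) → m1^∞ = δ/γ and m2(t) → m2^∞ = α(γK − δ)/(βγK) as t → ∞, and assume there exist ζ1, ζ2 > 0 with β m2(t) + (α/K) m1(t) + αχ ≥ ζ1 and γ(μ − m1(t)) + νθ ≥ ζ2 for all t. Let v1, v2 be differentiable solutions of v1' = −2(β m2 + (α/K) m1 + αχ) v1 + σ1 m1 (m1 + m2) and v2' = −2(γ(μ − m1) + νθ) v2 + σ2 m1 m2. Then v1(t) → v1^∞ =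 σ1 m1^∞ (m1^∞ + m2^∞)/(2(β m2^∞ + (α/K) m1^∞ + αχ)) and v2(t) → v2^∞ = σ2 m1^∞ m2^∞/(2(γ(μ − m1^∞) + νθ)) as t → ∞. -/
open Filter Real

lemma linODE_tendsto (a b v : ℝ → ℝ) (ζ L : ℝ) (hζ : 0 < ζ)
    (ha : ∀ t : ℝ, 0 ≤ t → ζ ≤ a t)
    (hv : ∀ t : ℝ, 0 ≤ t → HasDerivAt v (-(a t) * v t + b t) t)
    (hr : Filter.Tendsto (fun t => b t - a t * L) Filter.atTop (nhds 0)) :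
    Filter.Tendsto v Filter.atTop (nhds L) := by
  have hw : Filter.Tendsto (fun t => v t - L) Filter.atTop (nhds 0) := by
    rw [NormedAddCommGroup.tendsto_nhds_zero]
    intro ε hε
    set c : ℝ := ε / 2 with hc
    have hc0 : 0 < c := by positivity
    have hrs : ∀ᶠ t in atTop, |b t - a t * L| < ζ * c := by
      have := NormedAddCommGroup.tendsto_nhds_zero.mp hr (ζ * c) (by positivity)
      simpa using this
    obtain ⟨T, hT⟩ := (hrs.and (eventually_ge_atTop (0:ℝ))).exists_forall_of_atTop
    have hT0 : (0:ℝ) ≤ T := (hT T le_rfl).2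
    -- h t = ((v t - L)^2 - c^2) * exp (ζ t) is antitone on [T, ∞)
    set h : ℝ → ℝ := fun t => ((v t - L)^2 - c^2) * Real.exp (ζ * t) with hh
    have hderiv : ∀ t, T ≤ t → HasDerivAt h
        ((2 * (v t - L) * (-(a t) * v t + b t) + ζ * ((v t - L)^2 - c^2)) * Real.exp (ζ * t)) t := by
      intro t ht
      have h0t : (0:ℝ) ≤ t := le_trans hT0 ht
      have h1 : HasDerivAt (fun s => (v s - L)^2 - c^2)
          (2 * (v t - L) * (-(a t) * v t + b t)) t := by
        have := (((hv t h0t).sub_const L).pow 2).sub_const (c^2)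
        exact this.congr_deriv (by ring)
      have h2 : HasDerivAt (fun s => Real.exp (ζ * s)) (ζ * Real.exp (ζ * t)) t := by
        have := ((hasDerivAt_id t).const_mul ζ).exp
        simpa [mul_comm] using this
      have := h1.mul h2
      exact this.congr_deriv (by ring)
    have hnonpos : ∀ t, T ≤ t →
        (2 * (v t - L) * (-(a t) * v t + b t) + ζ * ((v t - L)^2 - c^2)) * Real.exp (ζ * t) ≤ 0 := by
      intro t ht
      have h0t : (0:ℝ) ≤ t := le_trans hT0 ht
      have hat := ha t h0t
      have hrt : |b t - a t * L| ≤ ζ * c := le_of_lt (hT t ht).1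
      set w := v t - L with hwdef
      set r := b t - a t * L with hrdef
      have hbr : -(a t) * v t + b t = -(a t) * w + r := by rw [hwdef, hrdef]; ring
      have key : 2 * w * (-(a t) * w + r) + ζ * (w^2 - c^2) ≤ 0 := by
        have h1 : r * w ≤ |r| * |w| := le_trans (le_abs_self _) (abs_mul r w).le
        have h2 : |r| * |w| ≤ ζ * c * |w| := mul_le_mul_of_nonneg_right hrt (abs_nonneg w)
        have h3 : 2 * (ζ * c * |w|) ≤ ζ * (c^2 + w^2) := by
          nlinarith [sq_nonneg (|w| - c), sq_abs w]
        nlinarith [mul_nonneg (sub_nonneg.mpr hat) (sq_nonneg w), sq_abs w]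
      rw [hbr]
      exact mul_nonpos_of_nonpos_of_nonneg key (Real.exp_nonneg _)
    have hanti : AntitoneOn h (Set.Ici T) := by
      apply antitoneOn_of_deriv_nonpos (convex_Ici T)
      · exact fun t ht => ((hderiv t ht).continuousAt).continuousWithinAt
      · intro t ht
        rw [interior_Ici] at ht
        exact ((hderiv t (le_of_lt ht)).differentiableAt).differentiableWithinAt
      · intro t ht
        rw [interior_Ici] at ht
        rw [(hderiv t (le_of_lt ht)).deriv]
        exact hnonpos t (le_of_lt ht)
    set M : ℝ := max (h T) 0 with hM
    have hbound : ∀ t, T ≤ t → (v t - L)^2 ≤ c^2 + M * Real.exp (-(ζ * t)) := by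
      intro t ht
      have := hanti (Set.self_mem_Ici) (Set.mem_Ici.mpr ht) ht
      have hEpos : 0 < Real.exp (ζ * t) := Real.exp_pos _
      have h1 : ((v t - L)^2 - c^2) * Real.exp (ζ * t) ≤ M := le_trans this (le_max_left _ _)
      have h2 : (v t - L)^2 - c^2 ≤ M * Real.exp (-(ζ * t)) := by
        rw [Real.exp_neg, ← div_eq_mul_inv]
        exact (le_div_iff₀ hEpos).mpr h1
      linarith
    have hM0 : 0 ≤ M := le_max_right _ _
    have hexp : Filter.Tendsto (fun t => M * Real.exp (-(ζ * t))) atTop (nhds 0) := by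
      have h1 : Filter.Tendsto (fun t : ℝ => ζ * t) atTop atTop :=
        Filter.Tendsto.const_mul_atTop hζ tendsto_id
      have := Real.tendsto_exp_neg_atTop_nhds_zero.comp h1
      have h2 := this.const_mul M
      simpa using h2
    have hev : ∀ᶠ t in atTop, M * Real.exp (-(ζ * t)) < c^2 := by
      have := hexp (by exact Iio_mem_nhds (by positivity) : Set.Iio (c^2) ∈ nhds (0:ℝ))
      simpa using this
    filter_upwards [hev, eventually_ge_atTop T] with t h1 h2
    have := hbound t h2
    have hsq : (v t - L)^2 < ε^2 := by nlinarith
    rw [Real.norm_eq_abs]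
    have := abs_lt.mpr (⟨by nlinarith [abs_nonneg (v t - L), sq_abs (v t - L)], by nlinarith [abs_nonneg (v t - L), sq_abs (v t - L)]⟩ : -ε < v t - L ∧ v t - L < ε)
    exact this
  have := hw.add_const L
  simpa using this

/-- Global asymptotic stability of the equilibrium variances
`(v1^∞, v2^∞)` for the variance system of the logistic Fokker–Planck model. -/
theorem logistic_variances_converge_to_equilibrium
    (α β γ δ ν σ1 σ2 K μ χ θ ζ1 ζ2 : ℝ)
    (hα : 0 < α) (hβ : 0 < β) (hγ : 0 < γ) (hδ : 0 < δ) (hν : 0 < ν)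
    (hσ1 : 0 < σ1) (hσ2 : 0 < σ2) (hK : 0 < K) (hμ : 1 ≤ μ)
    (hδeq : δ = γ * μ - ν) (hKδ : δ < γ * K)
    (m1 m2 v1 v2 : ℝ → ℝ)
    (hm1c : ContinuousOn m1 (Set.Ici 0)) (hm2c : ContinuousOn m2 (Set.Ici 0))
    (hbdd : ∃ C : ℝ, ∀ t : ℝ, 0 ≤ t → |m1 t| ≤ C ∧ |m2 t| ≤ C)
    (hm1lim : Filter.Tendsto m1 Filter.atTop (nhds (δ / γ)))
    (hm2lim : Filter.Tendsto m2 Filter.atTop (nhds (α * (γ * K - δ) / (β * γ * K))))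
    (hζ1 : 0 < ζ1) (hζ2 : 0 < ζ2)
    (hlb1 : ∀ t : ℝ, 0 ≤ t → ζ1 ≤ β * m2 t + α / K * m1 t + α * χ)
    (hlb2 : ∀ t : ℝ, 0 ≤ t → ζ2 ≤ γ * (μ - m1 t) + ν * θ)
    (hv1 : ∀ t : ℝ, 0 ≤ t →
      HasDerivAt v1 (-2 * (β * m2 t + α / K * m1 t + α * χ) * v1 t +
        σ1 * m1 t * (m1 t + m2 t)) t)
    (hv2 : ∀ t : ℝ, 0 ≤ t →
      HasDerivAt v2 (-2 * (γ * (μ - m1 t) + ν * θ) * v2 t + σ2 * m1 t * m2 t) t) :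
    Filter.Tendsto v1 Filter.atTop
      (nhds (σ1 * (δ / γ) * (δ / γ + α * (γ * K - δ) / (β * γ * K)) /
        (2 * (β * (α * (γ * K - δ) / (β * γ * K)) + α / K * (δ / γ) + α * χ)))) ∧
    Filter.Tendsto v2 Filter.atTop
      (nhds (σ2 * (δ / γ) * (α * (γ * K - δ) / (β * γ * K)) /
        (2 * (γ * (μ - δ / γ) + ν * θ)))) := by
  set M1 : ℝ := δ / γ with hM1
  set M2 : ℝ := α * (γ * K - δ) / (β * γ * K) with hM2
  -- limits of the coefficient functions
  have hA1 : Filter.Tendsto (fun t => 2 * (β * m2 t + α / K * m1 t + α * χ)) atTop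
      (nhds (2 * (β * M2 + α / K * M1 + α * χ))) := by
    exact tendsto_const_nhds.mul
      (((tendsto_const_nhds.mul hm2lim).add (tendsto_const_nhds.mul hm1lim)).add tendsto_const_nhds)
  have hA2 : Filter.Tendsto (fun t => 2 * (γ * (μ - m1 t) + ν * θ)) atTop
      (nhds (2 * (γ * (μ - M1) + ν * θ))) := by
    exact tendsto_const_nhds.mul
      ((tendsto_const_nhds.mul (tendsto_const_nhds.sub hm1lim)).add tendsto_const_nhds)
  have hB1 : Filter.Tendsto (fun t => σ1 * m1 t * (m1 t + m2 t)) atTop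
      (nhds (σ1 * M1 * (M1 + M2))) :=
    (tendsto_const_nhds.mul hm1lim).mul (hm1lim.add hm2lim)
  have hB2 : Filter.Tendsto (fun t => σ2 * m1 t * m2 t) atTop
      (nhds (σ2 * M1 * M2)) :=
    (tendsto_const_nhds.mul hm1lim).mul hm2lim
  -- limit coefficients are positive
  have hA1pos : ζ1 ≤ β * M2 + α / K * M1 + α * χ := by
    apply ge_of_tendsto
      (((tendsto_const_nhds.mul hm2lim).add (tendsto_const_nhds.mul hm1lim)).add
        (tendsto_const_nhds : Tendsto (fun _ : ℝ => α * χ) atTop (nhds (α * χ))))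
    filter_upwards [eventually_ge_atTop (0:ℝ)] with t ht
    exact hlb1 t ht
  have hA2pos : ζ2 ≤ γ * (μ - M1) + ν * θ := by
    apply ge_of_tendsto
      ((tendsto_const_nhds.mul (tendsto_const_nhds.sub hm1lim)).add
        (tendsto_const_nhds : Tendsto (fun _ : ℝ => ν * θ) atTop (nhds (ν * θ))))
    filter_upwards [eventually_ge_atTop (0:ℝ)] with t ht
    exact hlb2 t ht
  have hA1ne : (2 * (β * M2 + α / K * M1 + α * χ)) ≠ 0 := by
    have : (0:ℝ) < β * M2 + α / K * M1 + α * χ := lt_of_lt_of_le hζ1 hA1pos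
    positivity
  have hA2ne : (2 * (γ * (μ - M1) + ν * θ)) ≠ 0 := by
    have : (0:ℝ) < γ * (μ - M1) + ν * θ := lt_of_lt_of_le hζ2 hA2pos
    positivity
  constructor
  · apply linODE_tendsto (fun t => 2 * (β * m2 t + α / K * m1 t + α * χ))
      (fun t => σ1 * m1 t * (m1 t + m2 t)) v1 (2 * ζ1) _ (by linarith)
    · intro t ht; linarith [hlb1 t ht]
    · intro t ht
      have := hv1 t ht
      convert this using 1; ring
    · have h := hB1.sub (hA1.mul_const
        (σ1 * M1 * (M1 + M2) / (2 * (β * M2 + α / K * M1 + α * χ))))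
      have hz : σ1 * M1 * (M1 + M2) - 2 * (β * M2 + α / K * M1 + α * χ) *
          (σ1 * M1 * (M1 + M2) / (2 * (β * M2 + α / K * M1 + α * χ))) = 0 := by
        rw [mul_div_cancel₀ _ hA1ne]; ring
      rwa [hz] at h
  · apply linODE_tendsto (fun t => 2 * (γ * (μ - m1 t) + ν * θ))
      (fun t => σ2 * m1 t * m2 t) v2 (2 * ζ2) _ (by linarith)
    · intro t ht; linarith [hlb2 t ht]
    · intro t ht
      have := hv2 t ht
      convert this using 1; ring
    · have h := hB2.sub (hA2.mul_const
        (σ2 * M1 * M2 / (2 * (γ * (μ - M1) + ν * θ))))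
      have hz : σ2 * M1 * M2 - 2 * (γ * (μ - M1) + ν * θ) *
          (σ2 * M1 * M2 / (2 * (γ * (μ - M1) + ν * θ))) = 0 := by
        rw [mul_div_cancel₀ _ hA2ne]; ring
      rwa [hz] at h
end
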